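/- Let K be a field of characteristic zero, a ∈ lie_m^m and b ∈ lie_n^n tuples, σ a permutation of {1,…,m}, τ a permutation of {1,…,n}, and 1 ≤ i ≤ m. Define relabeled tuples (a^σ)_k := P_σ(a_{σ(k)}) and (b^τ)_k := P_τ(b_{τ(k)}). Then, as derivations of lie_{m+n−1}: D_{a^σ ∘_{σ⁻¹(i)} b^τ} = P_{σ∘_iτ} ∘ D_{a∘_ib} ∘ P_{σ∘_iτ}⁻¹, i.e., the partial composition of tangential derivations is equivariant with respect to relabeling by the inserted permutation σ∘_iτ. -/

import Mathlib

open FreeLieAlgebra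

variable (K : Type) [Field K] [CharZero K]

/-- The free Lie algebra over `K` on `N` generators `x_1, …, x_N`
(indexed here 0-based by `Fin N`). -/
abbrev lieF (N : ℕ) : Type := FreeLieAlgebra K (Fin N)

/-- The `(k+1)`-st generator of `lieF K N` (0-based index `k`), junk value `0` out of range. -/
noncomputable def xg (N k : ℕ) : lieF K N :=
  if h : k < N then FreeLieAlgebra.of K (⟨k, h⟩ : Fin N) else 0

/-- The Lie algebra homomorphism `Φ_i : lie_m → lie_{m+n-1}` sending (0-based) `x_j ↦ x_j`
for `j < i`, `x_i ↦ x_i + x_{i+1} + ⋯ + x_{i+n-1}`, and `x_j ↦ x_{j+n-1}` for `j > i`. -/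
noncomputable def PhiL (m n i : ℕ) : lieF K m →ₗ⁅K⁆ lieF K (m + n - 1) :=
  FreeLieAlgebra.lift K fun j : Fin m =>
    if (j : ℕ) < i then xg K (m + n - 1) (j : ℕ)
    else if (j : ℕ) = i then ∑ t : Fin n, xg K (m + n - 1) (i + (t : ℕ))
    else xg K (m + n - 1) ((j : ℕ) + n - 1)

/-- The Lie algebra homomorphism `Ψ_i : lie_n → lie_{m+n-1}` sending (0-based)
`x_j ↦ x_{i+j}`. -/
noncomputable def PsiL (m n i : ℕ) : lieF K n →ₗ⁅K⁆ lieF K (m + n - 1) :=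
  FreeLieAlgebra.lift K fun j : Fin n => xg K (m + n - 1) (i + (j : ℕ))

/-- The partial composition `f ∘_i g := Φ_i(f) + Ψ_i(g)` of free Lie algebra elements
(the pivot `i` is 0-based). -/
noncomputable def compL {m n : ℕ} (f : lieF K m) (i : ℕ) (g : lieF K n) :
    lieF K (m + n - 1) :=
  PhiL K m n i f + PsiL K m n i g

/-- The canonical identification `lie_N ≅ lie_{N'}` for `N = N'`. -/
noncomputable def recastL {N N' : ℕ} (hNN : N = N') : lieF K N →ₗ⁅K⁆ lieF K N' :=
  FreeLieAlgebra.lift K fun j => FreeLieAlgebra.of K (Fin.cast hNN j)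

/-- Entry of a tuple at a natural-number index (junk value `0` out of range). -/
noncomputable def tget {N : ℕ} (a : Fin N → lieF K N) (k : ℕ) : lieF K N :=
  if h : k < N then a ⟨k, h⟩ else 0

/-- The composed tuple `a ∘_i b ∈ (lie_{m+n-1})^{m+n-1}` (0-based indices): its entries are
`Φ_i(a_j)` in slot `j` for `j < i`, `Φ_i(a_i) + Ψ_i(b_k)` in slot `i+k` for `0 ≤ k < n`,
and `Φ_i(a_j)` in slot `j+n-1` for `j > i`. -/
noncomputable def compTup {m n : ℕ} (a : Fin m → lieF K m) (i : ℕ)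
    (b : Fin n → lieF K n) : Fin (m + n - 1) → lieF K (m + n - 1) := fun k =>
  if (k : ℕ) < i then PhiL K m n i (tget K a (k : ℕ))
  else if (k : ℕ) < i + n then
    PhiL K m n i (tget K a i) + PsiL K m n i (tget K b ((k : ℕ) - i))
  else PhiL K m n i (tget K a ((k : ℕ) + 1 - n))

/-- The Lie algebra of derivations of `lieF K N`. -/
abbrev DerL (N : ℕ) : Type := LieDerivation K (lieF K N) (lieF K N)

/-- The Lie algebra automorphism `P_σ` of `lie_N` with `P_σ(x_j) = x_{σ⁻¹(j)}`. -/
noncomputable def permL {N : ℕ} (σ : Equiv.Perm (Fin N)) : lieF K N →ₗ⁅K⁆ lieF K N :=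
  FreeLieAlgebra.lift K fun j => FreeLieAlgebra.of K (σ⁻¹ j)

/-- The value of a permutation of `Fin N` at a natural number (junk value `k` out of
range). -/
def permVal {N : ℕ} (σ : Equiv.Perm (Fin N)) (k : ℕ) : ℕ :=
  if h : k < N then ((σ ⟨k, h⟩ : Fin N) : ℕ) else k

set_option linter.unusedSectionVars false
set_option maxHeartbeats 1000000

lemma permL_of {N : ℕ} (σ : Equiv.Perm (Fin N)) (j : Fin N) :
    permL K σ (FreeLieAlgebra.of K j) = FreeLieAlgebra.of K (σ⁻¹ j) :=
  FreeLieAlgebra.lift_of_apply _ _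

lemma permL_inv_apply {N : ℕ} (σ : Equiv.Perm (Fin N)) (w : lieF K N) :
    permL K σ (permL K σ⁻¹ w) = w := by
  have h : (permL K σ).comp (permL K σ⁻¹) = LieHom.id := by
    apply FreeLieAlgebra.hom_ext
    intro x
    simp [permL_of]
  exact LieHom.congr_fun h w

lemma lieF_span_top (N : ℕ) :
    LieSubalgebra.lieSpan K (lieF K N) (Set.range (FreeLieAlgebra.of K)) = ⊤ := by
  set S := LieSubalgebra.lieSpan K (lieF K N) (Set.range (FreeLieAlgebra.of K)) with hS
  rw [eq_top_iff]
  intro w _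
  let f : lieF K N →ₗ⁅K⁆ S :=
    FreeLieAlgebra.lift K fun x => ⟨FreeLieAlgebra.of K x,
      LieSubalgebra.subset_lieSpan ⟨x, rfl⟩⟩
  have h : S.incl.comp f = LieHom.id := by
    apply FreeLieAlgebra.hom_ext
    intro x
    simp [f, FreeLieAlgebra.lift_of_apply]
  have h2 : S.incl (f w) = w := LieHom.congr_fun h w
  have := (f w).2
  rwa [show ((f w : S) : lieF K N) = w from h2] at this

lemma der_ext {N : ℕ} (D1 D2 : DerL K N)
    (h : ∀ x, D1 (FreeLieAlgebra.of K x) = D2 (FreeLieAlgebra.of K x)) : D1 = D2 :=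
  LieDerivation.ext_of_lieSpan_eq_top _ (lieF_span_top K N)
    (by rintro _ ⟨x, rfl⟩; exact h x)

noncomputable def conjDer {N : ℕ} (ρ : Equiv.Perm (Fin N)) (U : DerL K N) : DerL K N where
  toLinearMap := (permL K ρ).toLinearMap ∘ₗ U.toLinearMap ∘ₗ (permL K ρ⁻¹).toLinearMap
  leibniz' a b := by
    change (permL K ρ) (U ((permL K ρ⁻¹) ⁅a, b⁆)) =
      ⁅a, (permL K ρ) (U ((permL K ρ⁻¹) b))⁆ - ⁅b, (permL K ρ) (U ((permL K ρ⁻¹) a))⁆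
    rw [LieHom.map_lie, LieDerivation.apply_lie_eq_sub, map_sub, LieHom.map_lie, LieHom.map_lie,
      permL_inv_apply, permL_inv_apply]

lemma conjDer_apply {N : ℕ} (ρ : Equiv.Perm (Fin N)) (U : DerL K N) (w : lieF K N) :
    conjDer K ρ U w = permL K ρ (U (permL K ρ⁻¹ w)) := rfl

lemma permVal_lt {N : ℕ} (σ : Equiv.Perm (Fin N)) {k : ℕ} (h : k < N) :
    permVal σ k = ((σ ⟨k, h⟩ : Fin N) : ℕ) := dif_pos h

lemma permVal_fin {N : ℕ} (σ : Equiv.Perm (Fin N)) (x : Fin N) :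
    permVal σ (x : ℕ) = ((σ x : Fin N) : ℕ) := by
  rw [permVal_lt σ x.isLt, Fin.eta]

lemma xg_lt {N k : ℕ} (h : k < N) :
    xg K N k = FreeLieAlgebra.of K (⟨k, h⟩ : Fin N) := dif_pos h

lemma perm_inv_mk {N : ℕ} (ρ : Equiv.Perm (Fin N)) {k v : ℕ} (hk : k < N) (hv : v < N)
    (h : permVal ρ k = v) : ρ⁻¹ (⟨v, hv⟩ : Fin N) = ⟨k, hk⟩ := by
  have h2 : ρ ⟨k, hk⟩ = ⟨v, hv⟩ := Fin.ext (by rw [← permVal_lt ρ hk, h])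
  rw [← h2]
  simp

lemma permL_xg {N : ℕ} (ρ : Equiv.Perm (Fin N)) {k v : ℕ} (hk : k < N) (hv : v < N)
    (h : permVal ρ k = v) : permL K ρ (xg K N v) = xg K N k := by
  rw [xg_lt K hv, xg_lt K hk, permL_of, perm_inv_mk ρ hk hv h]

lemma permL_sum {N M : ℕ} (ρ : Equiv.Perm (Fin N)) (f : Fin M → lieF K N) :
    permL K ρ (∑ t, f t) = ∑ t, permL K ρ (f t) :=
  map_sum ((permL K ρ) : lieF K N →ₗ[K] lieF K N) f Finset.univ

lemma tget_mk {N : ℕ} (a : Fin N → lieF K N) {v : ℕ} (h : v < N) :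
    tget K a v = a ⟨v, h⟩ := dif_pos h

lemma claimA (m n : ℕ) (hn : 1 ≤ n)
    (σ : Equiv.Perm (Fin m)) (τ : Equiv.Perm (Fin n)) (i : ℕ) (hi : i < m)
    (ρ : Equiv.Perm (Fin (m + n - 1)))
    (hρ : ∀ k : ℕ, k < m + n - 1 →
      permVal ρ k =
        if k < permVal σ.symm i then
          if permVal σ k < i then permVal σ k else permVal σ k + n - 1
        else if k < permVal σ.symm i + n then
          permVal τ (k - permVal σ.symm i) + i
        else if permVal σ (k + 1 - n) < i then permVal σ (k + 1 - n)
        else permVal σ (k + 1 - n) + n - 1) :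
    ∀ x : lieF K m, permL K ρ (PhiL K m n i x)
      = PhiL K m n (permVal σ.symm i) (permL K σ x) := by
  have hm : 1 ≤ m := by omega
  obtain ⟨p, hpdef⟩ : ∃ p, permVal σ.symm i = p := ⟨_, rfl⟩
  rw [hpdef] at hρ ⊢
  have hpm : p < m := by
    rw [← hpdef, permVal_lt σ.symm hi]; exact (σ.symm ⟨i, hi⟩).isLt
  have e1v : ((σ.symm (⟨i, hi⟩ : Fin m)) : ℕ) = p := by
    rw [← permVal_lt σ.symm hi, hpdef]
  have e1 : σ.symm (⟨i, hi⟩ : Fin m) = ⟨p, hpm⟩ := Fin.ext e1v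
  have e2 : σ (⟨p, hpm⟩ : Fin m) = ⟨i, hi⟩ := by rw [← e1]; simp
  have hσp : permVal σ p = i := by rw [permVal_lt σ hpm, e2]
  suffices h : (permL K ρ).comp (PhiL K m n i) = (PhiL K m n p).comp (permL K σ) by
    intro x; exact LieHom.congr_fun h x
  apply FreeLieAlgebra.hom_ext
  intro j
  have hjm : (j : ℕ) < m := j.isLt
  have hj'm : ((σ⁻¹ j : Fin m) : ℕ) < m := (σ⁻¹ j).isLt
  have hσj : permVal σ ((σ⁻¹ j : Fin m) : ℕ) = (j : ℕ) := by
    rw [permVal_fin]; simp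
  have hip : (j : ℕ) = i ↔ ((σ⁻¹ j : Fin m) : ℕ) = p := by
    constructor
    · intro he
      have h3 : σ⁻¹ j = ⟨p, hpm⟩ := by
        rw [show j = (⟨i, hi⟩ : Fin m) from Fin.ext he, Equiv.Perm.inv_def, e1]
      rw [h3]
    · intro he
      have h3 : j = (⟨i, hi⟩ : Fin m) := by
        rw [← e2, ← show (σ⁻¹ j : Fin m) = ⟨p, hpm⟩ from Fin.ext he]
        simp
      rw [h3]
  simp only [LieHom.comp_apply, permL_of, PhiL, FreeLieAlgebra.lift_of_apply]
  rcases lt_trichotomy ((σ⁻¹ j : Fin m) : ℕ) p with h | h | h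
  · have hne : (j : ℕ) ≠ i := fun he => absurd (hip.mp he) (by omega)
    have h1 := hρ ((σ⁻¹ j : Fin m) : ℕ) (by omega)
    rw [if_pos h, hσj] at h1
    rcases Nat.lt_or_ge (j : ℕ) i with hj | hj
    · rw [if_pos hj] at h1
      rw [if_pos hj, if_pos h]
      exact permL_xg K ρ (by omega) (by omega) h1
    · rw [if_neg (by omega : ¬ ((j : ℕ) < i))] at h1
      rw [if_neg (by omega : ¬ ((j : ℕ) < i)), if_neg hne, if_pos h]
      exact permL_xg K ρ (by omega) (by omega) h1
  · have hj : (j : ℕ) = i := hip.mpr h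
    rw [if_neg (by omega : ¬ ((j : ℕ) < i)), if_pos hj,
      if_neg (by omega : ¬ (((σ⁻¹ j : Fin m) : ℕ) < p)), if_pos h]
    rw [permL_sum]
    refine (Fintype.sum_equiv τ _ _ fun s => ?_).symm
    have hs : (s : ℕ) < n := s.isLt
    have hτs : ((τ s : Fin n) : ℕ) < n := (τ s).isLt
    have hv : permVal ρ (p + (s : ℕ)) = i + ((τ s : Fin n) : ℕ) := by
      have h1 := hρ (p + (s : ℕ)) (by omega)
      rw [if_neg (by omega : ¬ (p + (s : ℕ) < p)),
        if_pos (by omega : p + (s : ℕ) < p + n),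
        show p + (s : ℕ) - p = (s : ℕ) by omega, permVal_fin] at h1
      omega
    exact (permL_xg K ρ (by omega) (by omega) hv).symm
  · have hne : (j : ℕ) ≠ i := fun he => absurd (hip.mp he) (by omega)
    have h1 := hρ (((σ⁻¹ j : Fin m) : ℕ) + n - 1) (by omega)
    rw [if_neg (by omega : ¬ (((σ⁻¹ j : Fin m) : ℕ) + n - 1 < p)),
      if_neg (by omega : ¬ (((σ⁻¹ j : Fin m) : ℕ) + n - 1 < p + n)),
      show ((σ⁻¹ j : Fin m) : ℕ) + n - 1 + 1 - n = ((σ⁻¹ j : Fin m) : ℕ) by omega,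
      hσj] at h1
    rcases Nat.lt_or_ge (j : ℕ) i with hj | hj
    · rw [if_pos hj] at h1
      rw [if_pos hj, if_neg (by omega : ¬ (((σ⁻¹ j : Fin m) : ℕ) < p)),
        if_neg (by omega : ¬ (((σ⁻¹ j : Fin m) : ℕ) = p))]
      exact permL_xg K ρ (by omega) (by omega) h1
    · rw [if_neg (by omega : ¬ ((j : ℕ) < i))] at h1
      rw [if_neg (by omega : ¬ ((j : ℕ) < i)), if_neg hne,
        if_neg (by omega : ¬ (((σ⁻¹ j : Fin m) : ℕ) < p)),
        if_neg (by omega : ¬ (((σ⁻¹ j : Fin m) : ℕ) = p))]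
      exact permL_xg K ρ (by omega) (by omega) h1

lemma claimB (m n : ℕ) (hn : 1 ≤ n)
    (σ : Equiv.Perm (Fin m)) (τ : Equiv.Perm (Fin n)) (i : ℕ) (hi : i < m)
    (ρ : Equiv.Perm (Fin (m + n - 1)))
    (hρ : ∀ k : ℕ, k < m + n - 1 →
      permVal ρ k =
        if k < permVal σ.symm i then
          if permVal σ k < i then permVal σ k else permVal σ k + n - 1
        else if k < permVal σ.symm i + n then
          permVal τ (k - permVal σ.symm i) + i
        else if permVal σ (k + 1 - n) < i then permVal σ (k + 1 - n)
        else permVal σ (k + 1 - n) + n - 1) :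
    ∀ x : lieF K n, permL K ρ (PsiL K m n i x)
      = PsiL K m n (permVal σ.symm i) (permL K τ x) := by
  have hm : 1 ≤ m := by omega
  obtain ⟨p, hpdef⟩ : ∃ p, permVal σ.symm i = p := ⟨_, rfl⟩
  rw [hpdef] at hρ ⊢
  have hpm : p < m := by
    rw [← hpdef, permVal_lt σ.symm hi]; exact (σ.symm ⟨i, hi⟩).isLt
  suffices h : (permL K ρ).comp (PsiL K m n i) = (PsiL K m n p).comp (permL K τ) by
    intro x; exact LieHom.congr_fun h x
  apply FreeLieAlgebra.hom_ext
  intro j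
  have hjn : (j : ℕ) < n := j.isLt
  have hj'n : ((τ⁻¹ j : Fin n) : ℕ) < n := (τ⁻¹ j).isLt
  simp only [LieHom.comp_apply, permL_of, PsiL, FreeLieAlgebra.lift_of_apply]
  have hτ : permVal τ ((τ⁻¹ j : Fin n) : ℕ) = (j : ℕ) := by rw [permVal_fin]; simp
  have hv : permVal ρ (p + ((τ⁻¹ j : Fin n) : ℕ)) = i + (j : ℕ) := by
    have h1 := hρ (p + ((τ⁻¹ j : Fin n) : ℕ)) (by omega)
    rw [if_neg (by omega : ¬ (p + ((τ⁻¹ j : Fin n) : ℕ) < p)),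
      if_pos (by omega : p + ((τ⁻¹ j : Fin n) : ℕ) < p + n),
      show p + ((τ⁻¹ j : Fin n) : ℕ) - p = ((τ⁻¹ j : Fin n) : ℕ) by omega, hτ] at h1
    omega
  exact permL_xg K ρ (by omega) (by omega) hv

lemma claimC (m n : ℕ) (hn : 1 ≤ n)
    (a : Fin m → lieF K m) (b : Fin n → lieF K n)
    (σ : Equiv.Perm (Fin m)) (τ : Equiv.Perm (Fin n)) (i : ℕ) (hi : i < m)
    (ρ : Equiv.Perm (Fin (m + n - 1)))
    (hρ : ∀ k : ℕ, k < m + n - 1 →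
      permVal ρ k =
        if k < permVal σ.symm i then
          if permVal σ k < i then permVal σ k else permVal σ k + n - 1
        else if k < permVal σ.symm i + n then
          permVal τ (k - permVal σ.symm i) + i
        else if permVal σ (k + 1 - n) < i then permVal σ (k + 1 - n)
        else permVal σ (k + 1 - n) + n - 1) :
    ∀ k : Fin (m + n - 1),
      compTup K (fun s => permL K σ (a (σ s))) (permVal σ.symm i)
          (fun s => permL K τ (b (τ s))) k
        = permL K ρ (compTup K a i b (ρ k)) := by
  intro k
  have hm : 1 ≤ m := by omega
  have hA := claimA K m n hn σ τ i hi ρ hρ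
  have hB := claimB K m n hn σ τ i hi ρ hρ
  obtain ⟨p, hpdef⟩ : ∃ p, permVal σ.symm i = p := ⟨_, rfl⟩
  rw [hpdef] at hρ hA hB ⊢
  have hpm : p < m := by
    rw [← hpdef, permVal_lt σ.symm hi]; exact (σ.symm ⟨i, hi⟩).isLt
  have e1v : ((σ.symm (⟨i, hi⟩ : Fin m)) : ℕ) = p := by
    rw [← permVal_lt σ.symm hi, hpdef]
  have e1 : σ.symm (⟨i, hi⟩ : Fin m) = ⟨p, hpm⟩ := Fin.ext e1v
  have e2 : σ (⟨p, hpm⟩ : Fin m) = ⟨i, hi⟩ := by rw [← e1]; simp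
  have hkM : (k : ℕ) < m + n - 1 := k.isLt
  have hρkM : ((ρ k : Fin (m + n - 1)) : ℕ) < m + n - 1 := (ρ k).isLt
  have hρk : ((ρ k : Fin (m + n - 1)) : ℕ) = permVal ρ (k : ℕ) := by
    rw [permVal_lt ρ hkM, Fin.eta]
  have h1 := hρ (k : ℕ) hkM
  simp only [compTup]
  rcases Nat.lt_or_ge (k : ℕ) p with h | h
  · -- k < p
    have hkm : (k : ℕ) < m := by omega
    rw [if_pos h] at h1
    rw [if_pos h, tget_mk K _ hkm]
    set j := σ (⟨(k : ℕ), hkm⟩ : Fin m) with hjdef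
    have hjm : (j : ℕ) < m := j.isLt
    have hσk : permVal σ (k : ℕ) = (j : ℕ) := permVal_lt σ hkm
    have hji : (j : ℕ) ≠ i := by
      intro he
      have h3 : σ (⟨(k : ℕ), hkm⟩ : Fin m) = σ (⟨p, hpm⟩ : Fin m) := by
        rw [e2, ← hjdef]; exact Fin.ext he
      have h5 : (k : ℕ) = p := congrArg Fin.val (σ.injective h3)
      omega
    rw [hσk] at h1
    rcases Nat.lt_or_ge (j : ℕ) i with hj | hj
    · rw [if_pos hj] at h1
      have hv : ((ρ k : Fin (m + n - 1)) : ℕ) = (j : ℕ) := by rw [hρk, h1]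
      have hvm : ((ρ k : Fin (m + n - 1)) : ℕ) < m := by omega
      rw [if_pos (by omega : ((ρ k : Fin (m + n - 1)) : ℕ) < i),
        tget_mk K a hvm,
        show (⟨((ρ k : Fin (m + n - 1)) : ℕ), hvm⟩ : Fin m) = j from Fin.ext hv]
      exact (hA (a j)).symm
    · rw [if_neg (by omega : ¬ (j : ℕ) < i)] at h1
      have hv : ((ρ k : Fin (m + n - 1)) : ℕ) = (j : ℕ) + n - 1 := by rw [hρk, h1]
      have hvm : ((ρ k : Fin (m + n - 1)) : ℕ) + 1 - n < m := by omega
      have hv2 : ((ρ k : Fin (m + n - 1)) : ℕ) + 1 - n = (j : ℕ) := by omega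
      rw [if_neg (by omega : ¬ ((ρ k : Fin (m + n - 1)) : ℕ) < i),
        if_neg (by omega : ¬ ((ρ k : Fin (m + n - 1)) : ℕ) < i + n),
        tget_mk K a hvm,
        show (⟨((ρ k : Fin (m + n - 1)) : ℕ) + 1 - n, hvm⟩ : Fin m) = j from Fin.ext hv2]
      exact (hA (a j)).symm
  · rcases Nat.lt_or_ge (k : ℕ) (p + n) with h2 | h2
    · -- p ≤ k < p + n
      rw [if_neg (by omega : ¬ (k : ℕ) < p), if_pos h2] at h1
      have hlt : (k : ℕ) - p < n := by omega
      have hτv : permVal τ ((k : ℕ) - p) = ((τ (⟨(k : ℕ) - p, hlt⟩ : Fin n) : Fin n) : ℕ) :=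
        permVal_lt τ hlt
      set s := τ (⟨(k : ℕ) - p, hlt⟩ : Fin n) with hsdef
      have hsn : (s : ℕ) < n := s.isLt
      have hv : ((ρ k : Fin (m + n - 1)) : ℕ) = (s : ℕ) + i := by rw [hρk, h1, hτv]
      rw [if_neg (by omega : ¬ (k : ℕ) < p), if_pos h2,
        tget_mk K _ hpm, tget_mk K _ hlt,
        if_neg (by omega : ¬ ((ρ k : Fin (m + n - 1)) : ℕ) < i),
        if_pos (by omega : ((ρ k : Fin (m + n - 1)) : ℕ) < i + n),
        tget_mk K a hi, tget_mk K b (show ((ρ k : Fin (m + n - 1)) : ℕ) - i < n by omega),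
        show (⟨((ρ k : Fin (m + n - 1)) : ℕ) - i, (show _ < n by omega)⟩ : Fin n) = s from
          Fin.ext (by simp only [Fin.val_mk]; omega),
        e2]
      rw [map_add, hA, hB]
    · -- k ≥ p + n
      rw [if_neg (by omega : ¬ (k : ℕ) < p), if_neg (by omega : ¬ (k : ℕ) < p + n)] at h1
      have hk1 : (k : ℕ) + 1 - n < m := by omega
      rw [if_neg (by omega : ¬ (k : ℕ) < p), if_neg (by omega : ¬ (k : ℕ) < p + n),
        tget_mk K _ hk1]
      set j := σ (⟨(k : ℕ) + 1 - n, hk1⟩ : Fin m) with hjdef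
      have hjm : (j : ℕ) < m := j.isLt
      have hσk : permVal σ ((k : ℕ) + 1 - n) = (j : ℕ) := permVal_lt σ hk1
      have hji : (j : ℕ) ≠ i := by
        intro he
        have h3 : σ (⟨(k : ℕ) + 1 - n, hk1⟩ : Fin m) = σ (⟨p, hpm⟩ : Fin m) := by
          rw [e2, ← hjdef]; exact Fin.ext he
        have h5 : (k : ℕ) + 1 - n = p := congrArg Fin.val (σ.injective h3)
        omega
      rw [hσk] at h1
      rcases Nat.lt_or_ge (j : ℕ) i with hj | hj
      · rw [if_pos hj] at h1
        have hv : ((ρ k : Fin (m + n - 1)) : ℕ) = (j : ℕ) := by rw [hρk, h1]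
        have hvm : ((ρ k : Fin (m + n - 1)) : ℕ) < m := by omega
        rw [if_pos (by omega : ((ρ k : Fin (m + n - 1)) : ℕ) < i),
          tget_mk K a hvm,
          show (⟨((ρ k : Fin (m + n - 1)) : ℕ), hvm⟩ : Fin m) = j from Fin.ext hv]
        exact (hA (a j)).symm
      · rw [if_neg (by omega : ¬ (j : ℕ) < i)] at h1
        have hv : ((ρ k : Fin (m + n - 1)) : ℕ) = (j : ℕ) + n - 1 := by rw [hρk, h1]
        have hvm : ((ρ k : Fin (m + n - 1)) : ℕ) + 1 - n < m := by omega
        have hv2 : ((ρ k : Fin (m + n - 1)) : ℕ) + 1 - n = (j : ℕ) := by omega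
        rw [if_neg (by omega : ¬ ((ρ k : Fin (m + n - 1)) : ℕ) < i),
          if_neg (by omega : ¬ ((ρ k : Fin (m + n - 1)) : ℕ) < i + n),
          tget_mk K a hvm,
          show (⟨((ρ k : Fin (m + n - 1)) : ℕ) + 1 - n, hvm⟩ : Fin m) = j from Fin.ext hv2]
        exact (hA (a j)).symm

/-- Equivariance of the partial composition of tangential derivations under relabeling:
`D_{a^σ ∘_{σ⁻¹(i)} b^τ} = P_{σ∘_iτ} ∘ D_{a∘_ib} ∘ P_{σ∘_iτ}⁻¹` as derivations of
`lie_{m+n-1}`, where `(a^σ)_k := P_σ(a_{σ(k)})`, `(b^τ)_k := P_τ(b_{τ(k)})`, and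
`ρ = σ∘_iτ` is the inserted permutation (hypothesis `hρ`, with the paper's 1-based case
formulas translated to 0-based indices, `p := σ⁻¹(i)`). -/
theorem tangential_comp_equivariant (m n : ℕ) (hn : 1 ≤ n)
    (a : Fin m → lieF K m) (b : Fin n → lieF K n)
    (σ : Equiv.Perm (Fin m)) (τ : Equiv.Perm (Fin n)) (i : ℕ) (hi : i < m)
    (ρ : Equiv.Perm (Fin (m + n - 1)))
    (hρ : ∀ k : ℕ, k < m + n - 1 →
      permVal ρ k =
        if k < permVal σ.symm i then
          if permVal σ k < i then permVal σ k else permVal σ k + n - 1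
        else if k < permVal σ.symm i + n then
          permVal τ (k - permVal σ.symm i) + i
        else if permVal σ (k + 1 - n) < i then permVal σ (k + 1 - n)
        else permVal σ (k + 1 - n) + n - 1)
    (U V : DerL K (m + n - 1))
    (hU : ∀ k : Fin (m + n - 1),
      U (FreeLieAlgebra.of K k) = ⁅FreeLieAlgebra.of K k, compTup K a i b k⁆)
    (hV : ∀ k : Fin (m + n - 1),
      V (FreeLieAlgebra.of K k) =
        ⁅FreeLieAlgebra.of K k,
          compTup K (fun s => permL K σ (a (σ s))) (permVal σ.symm i)
            (fun s => permL K τ (b (τ s))) k⁆) :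
    ∀ w : lieF K (m + n - 1), V w = permL K ρ (U (permL K ρ⁻¹ w)) := by
  have hC := claimC K m n hn a b σ τ i hi ρ hρ
  suffices hVW : V = conjDer K ρ U by
    intro w; rw [hVW]; rfl
  apply der_ext
  intro x
  rw [hV x, conjDer_apply]
  rw [show permL K ρ⁻¹ (FreeLieAlgebra.of K x) = FreeLieAlgebra.of K (ρ x) by
    rw [permL_of]; simp]
  rw [hU (ρ x), LieHom.map_lie, permL_of,
    show ρ⁻¹ (ρ x) = x by simp, hC x]
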